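/- Let N > 1 and n ≤ N and K ≥ 1 be integers, and let γ_1, …, γ_N ∈ ℂ^n and α_1, …, α_K ∈ ℂ^n. Assume: (i) for every i ∈ {1, …, n} there exists k with α_k(i) ≠ 0; and (ii) there exist pairwise distinct indices j_1, …, j_n ∈ {1, …, N} such that for every i and every ℓ ≠ j_i, |γ_{j_i}(i)| > (N − 1)·|γ_ℓ(i)|. For each i ∈ {1, …, n} choose k_i′ ∈ {1, …, K} with |α_{k_i′}(i)| = max_{1 ≤ k ≤ K} |α_k(i)| (so that α_{k_i′}(i) ≠ 0 by (i)). Then the n vectors u_1, …, u_n ∈ ℂ^n defined by u_i(h) = γ_{j_i}(h)·α_{k_i′}(h) for h = 1, …, n (i.e., u_i = γ_{j_i} ⊙ α_{k_i′}) are linearly independent, and hence form a basis for ℂ^n. -/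

import Mathlib

/-- The key intermediate claim in the proof of the theorem on strong
dominance and multiplicative frames: with `N > 1`, `n ≤ N`, `K ≥ 1`,
`i`-radiativity (`∃ k, α k i ≠ 0` for every `i`), pairwise distinct indices
`jsel 1, …, jsel n` satisfying strong `i`-dominance
(`|γ (jsel i) i| > (N - 1) · |γ ℓ i|` for every `ℓ ≠ jsel i`), and times
`ki' i` chosen so that `|α (ki' i) i|` is maximal over `k`, the `n` vectors
`u i = γ (jsel i) ⊙ α (ki' i)` (pointwise products) are linearly
independent, and hence form a basis for `ℂⁿ`. -/
theorem strong_dominance_basis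
    (n N K : ℕ) (hN1 : 1 < N) (hnN : n ≤ N) (hK : 1 ≤ K)
    (γ : Fin N → Fin n → ℂ) (α : Fin K → Fin n → ℂ)
    (hrad : ∀ i : Fin n, ∃ k : Fin K, α k i ≠ 0)
    (jsel : Fin n → Fin N) (hjsel : Function.Injective jsel)
    (hdom : ∀ i : Fin n, ∀ ℓ : Fin N, ℓ ≠ jsel i →
      ((N : ℝ) - 1) * ‖γ ℓ i‖ < ‖γ (jsel i) i‖)
    (ki' : Fin n → Fin K)
    (hmax : ∀ i : Fin n, ∀ k : Fin K,
      ‖α k i‖ ≤ ‖α (ki' i) i‖)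
    (u : Fin n → (Fin n → ℂ))
    (hu : ∀ i h, u i h = γ (jsel i) h * α (ki' i) h) :
    LinearIndependent ℂ u ∧ Submodule.span ℂ (Set.range u) = ⊤ := by
  set A : Matrix (Fin n) (Fin n) ℂ := Matrix.of u with hA
  have hN1' : (0 : ℝ) < (N : ℝ) - 1 := by
    have : (1 : ℝ) < (N : ℝ) := by exact_mod_cast hN1
    linarith
  -- column strict diagonal dominance
  have hcol : ∀ i : Fin n,
      ∑ k ∈ Finset.univ.erase i, ‖A k i‖ < ‖A i i‖ := by
    intro i
    -- positivity of the maximal α at i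
    have ha : 0 < ‖α (ki' i) i‖ := by
      obtain ⟨k, hk⟩ := hrad i
      exact lt_of_lt_of_le (by simpa using hk) (hmax i k)
    -- positivity of the dominant γ at i
    have hg : 0 < ‖γ (jsel i) i‖ := by
      obtain ⟨ℓ, hℓ⟩ : ∃ ℓ : Fin N, ℓ ≠ jsel i := by
        have : Nontrivial (Fin N) := Fin.nontrivial_iff_two_le.mpr hN1
        exact exists_ne (jsel i)
      exact lt_of_le_of_lt (by positivity) (hdom i ℓ hℓ)
    have hdiag : ‖A i i‖ = ‖γ (jsel i) i‖ * ‖α (ki' i) i‖ := by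
      simp [hA, hu i i, map_mul]
    have hdiagpos : 0 < ‖A i i‖ := by rw [hdiag]; positivity
    -- bound each off-diagonal entry
    have hterm : ∀ k ∈ Finset.univ.erase i,
        ((N : ℝ) - 1) * ‖A k i‖ < ‖A i i‖ := by
      intro k hk
      have hki : k ≠ i := Finset.ne_of_mem_erase hk
      have hj : jsel k ≠ jsel i := fun h => hki (hjsel h)
      have h1 : ‖A k i‖ ≤ ‖γ (jsel k) i‖ * ‖α (ki' i) i‖ := by
        have : ‖A k i‖ = ‖γ (jsel k) i‖ * ‖α (ki' k) i‖ := by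
          simp [hA, hu k i, map_mul]
        rw [this]
        exact mul_le_mul_of_nonneg_left (hmax i (ki' k)) (by positivity)
      have h2 : ((N : ℝ) - 1) * (‖γ (jsel k) i‖ * ‖α (ki' i) i‖)
          < ‖γ (jsel i) i‖ * ‖α (ki' i) i‖ := by
        rw [← mul_assoc]
        exact mul_lt_mul_of_pos_right (hdom i (jsel k) hj) ha
      calc ((N : ℝ) - 1) * ‖A k i‖
          ≤ ((N : ℝ) - 1) * (‖γ (jsel k) i‖ * ‖α (ki' i) i‖) :=
            mul_le_mul_of_nonneg_left h1 hN1'.le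
        _ < ‖γ (jsel i) i‖ * ‖α (ki' i) i‖ := h2
        _ = ‖A i i‖ := hdiag.symm
    rcases (Finset.univ.erase i).eq_empty_or_nonempty with he | he
    · simpa [he] using hdiagpos
    · have hsum : ((N : ℝ) - 1) * ∑ k ∈ Finset.univ.erase i, ‖A k i‖
          < ((Finset.univ.erase i).card : ℝ) * ‖A i i‖ := by
        rw [Finset.mul_sum]
        calc ∑ k ∈ Finset.univ.erase i, ((N : ℝ) - 1) * ‖A k i‖
            < ∑ _k ∈ Finset.univ.erase i, ‖A i i‖ :=
              Finset.sum_lt_sum_of_nonempty he hterm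
          _ = ((Finset.univ.erase i).card : ℝ) * ‖A i i‖ := by
              rw [Finset.sum_const, nsmul_eq_mul]
      have hcard : ((Finset.univ.erase i).card : ℝ) ≤ (N : ℝ) - 1 := by
        have : (Finset.univ.erase i).card = n - 1 := by
          simp [Finset.card_erase_of_mem]
        rw [this]
        have h1n : 1 ≤ n := Nat.one_le_iff_ne_zero.mpr (by
          rintro rfl; exact absurd i.2 (by simp))
        have : ((n - 1 : ℕ) : ℝ) = (n : ℝ) - 1 := by
          push_cast [Nat.cast_sub h1n]; ring
        rw [this]
        have : (n : ℝ) ≤ (N : ℝ) := by exact_mod_cast hnN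
        linarith
      have := lt_of_lt_of_le hsum (mul_le_mul_of_nonneg_right hcard hdiagpos.le)
      exact lt_of_mul_lt_mul_left this hN1'.le |>.trans_le le_rfl
      |>.trans_le le_rfl
  have hdet : A.det ≠ 0 := det_ne_zero_of_sum_col_lt_diag hcol
  have hunit : IsUnit A := (Matrix.isUnit_iff_isUnit_det A).mpr (isUnit_iff_ne_zero.mpr hdet)
  constructor
  · exact Matrix.linearIndependent_rows_iff_isUnit.mpr hunit
  · have hsurj : Function.Surjective A.vecMul :=
      Matrix.vecMul_surjective_iff_isUnit.mpr hunit
    have := range_vecMulLinear A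
    rw [LinearMap.range_eq_top.mpr hsurj] at this
    exact this.symm
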